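/- arXiv:0909.2929 — 6 statements merged into one kernel-verified Lean document; each statement's English description precedes it below -/
import Mathlib

section
/- Let a < b be real numbers and let ω : [a,b] → ℝ be a càdlàg function (right-continuous with left limits). Then the Laplace asymptotics lim_{c→+∞} (1/c)·log( ∫_a^b e^{−c·ω(y)} dy ) = sup_{y∈(a,b)} (−ω(y)) holds; in particular, if ω is nonnegative on [a,b] with inf_{(a,b)} ω = 0, then ∫_a^b e^{−c·ω(y)} dy = e^{o(c)} as c → +∞. -/
open Filter Set MeasureTheory Topology

lemma cadlag_bounded (a b : ℝ) (ω : ℝ → ℝ)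
    (hright : ∀ x ∈ Set.Ico a b, ContinuousWithinAt ω (Set.Ici x) x)
    (hleft : ∀ x ∈ Set.Ioc a b, ∃ l : ℝ, Tendsto ω (𝓝[<] x) (𝓝 l)) :
    ∃ C : ℝ, ∀ y ∈ Set.Icc a b, |ω y| ≤ C := by
  refine IsCompact.induction_on (isCompact_Icc (a := a) (b := b))
    (p := fun s => ∃ C : ℝ, ∀ y ∈ s, |ω y| ≤ C)
    ⟨0, by simp⟩
    (fun s t hst ht => ht.imp fun C hC y hy => hC y (hst hy))
    (fun s t hs ht => by
      obtain ⟨C, hC⟩ := hs; obtain ⟨D, hD⟩ := ht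
      exact ⟨max C D, fun y hy => hy.elim (fun h => (hC y h).trans (le_max_left _ _))
        (fun h => (hD y h).trans (le_max_right _ _))⟩)
    (fun x hx => ?_)
  have hsplit : Set.Icc a b = (Set.Icc a b ∩ Set.Iio x) ∪ (Set.Icc a b ∩ Set.Ici x) := by
    rw [← Set.inter_union_distrib_left, Set.Iio_union_Ici, Set.inter_univ]
  have hL : ∃ C : ℝ, ∀ᶠ y in 𝓝[Set.Icc a b ∩ Set.Iio x] x, |ω y| ≤ C := by
    rcases le_or_gt x a with h | h
    · refine ⟨0, ?_⟩
      have hemp : Set.Icc a b ∩ Set.Iio x = ∅ := by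
        ext y
        simp only [Set.mem_inter_iff, Set.mem_Icc, Set.mem_Iio, Set.mem_empty_iff_false,
          iff_false, not_and]
        rintro ⟨h1, _⟩ h2; linarith
      rw [hemp, nhdsWithin_empty]
      exact Filter.eventually_bot
    · obtain ⟨l, hl⟩ := hleft x ⟨h, hx.2⟩
      refine ⟨|l| + 1, ?_⟩
      have h1 : ∀ᶠ y in 𝓝[<] x, ω y ∈ Metric.ball l 1 := hl (Metric.ball_mem_nhds l one_pos)
      refine ((h1.mono fun y hy => ?_).filter_mono (nhdsWithin_mono x Set.inter_subset_right))
      rw [Metric.mem_ball, Real.dist_eq] at hy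
      have := abs_sub_abs_le_abs_sub (ω y) l
      linarith
  have hR : ∃ C : ℝ, ∀ᶠ y in 𝓝[Set.Icc a b ∩ Set.Ici x] x, |ω y| ≤ C := by
    rcases lt_or_eq_of_le hx.2 with h | h
    · refine ⟨|ω x| + 1, ?_⟩
      have h1 : ∀ᶠ y in 𝓝[Set.Ici x] x, ω y ∈ Metric.ball (ω x) 1 :=
        hright x ⟨hx.1, h⟩ (Metric.ball_mem_nhds (ω x) one_pos)
      refine ((h1.mono fun y hy => ?_).filter_mono (nhdsWithin_mono x Set.inter_subset_right))
      rw [Metric.mem_ball, Real.dist_eq] at hy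
      have := abs_sub_abs_le_abs_sub (ω y) (ω x)
      linarith
    · refine ⟨|ω b|, ?_⟩
      filter_upwards [self_mem_nhdsWithin] with y hy
      have : y = b := le_antisymm hy.1.2 (h ▸ hy.2)
      rw [this]
  obtain ⟨C1, h1⟩ := hL; obtain ⟨C2, h2⟩ := hR
  have hev : ∀ᶠ y in 𝓝[Set.Icc a b] x, |ω y| ≤ max C1 C2 := by
    rw [hsplit, nhdsWithin_union, Filter.eventually_sup]
    exact ⟨h1.mono fun y hy => hy.trans (le_max_left _ _),
      h2.mono fun y hy => hy.trans (le_max_right _ _)⟩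
  exact ⟨_, hev, max C1 C2, fun y hy => hy⟩

lemma cadlag_aemeasurable (a b : ℝ) (ω : ℝ → ℝ)
    (hright : ∀ x ∈ Set.Ico a b, ContinuousWithinAt ω (Set.Ici x) x) :
    AEMeasurable ω (volume.restrict (Set.Ioc a b)) := by
  set g : ℕ → ℝ → ℝ := fun n y => ω (min b ((((⌊y * 2 ^ n⌋ : ℤ) : ℝ) + 1) / 2 ^ n)) with hg
  have hgm : ∀ n, Measurable (g n) := fun n =>
    (measurable_of_countable fun k : ℤ => ω (min b (((k : ℝ) + 1) / 2 ^ n))).comp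
      (Int.measurable_floor.comp (measurable_id.mul_const _))
  have hconv : ∀ y ∈ Set.Ico a b, Tendsto (fun n => g n y) atTop (𝓝 (ω y)) := by
    intro y hy
    have hpow : ∀ n : ℕ, (0:ℝ) < 2 ^ n := fun n => pow_pos two_pos n
    have hlt : ∀ n, y < (((⌊y * 2 ^ n⌋ : ℤ) : ℝ) + 1) / 2 ^ n := by
      intro n
      rw [lt_div_iff₀ (hpow n)]
      exact Int.lt_floor_add_one (y * 2 ^ n)
    have hle : ∀ n, (((⌊y * 2 ^ n⌋ : ℤ) : ℝ) + 1) / 2 ^ n ≤ y + ((2:ℝ) ^ n)⁻¹ := by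
      intro n
      rw [div_le_iff₀ (hpow n)]
      have h1 := Int.floor_le (y * 2 ^ n)
      have h2 : (y + ((2:ℝ) ^ n)⁻¹) * 2 ^ n = y * 2 ^ n + 1 := by
        field_simp
      rw [h2]; linarith
    set x : ℕ → ℝ := fun n => min b ((((⌊y * 2 ^ n⌋ : ℤ) : ℝ) + 1) / 2 ^ n) with hx
    have hxy : ∀ n, y < x n := fun n => lt_min hy.2 (hlt n)
    have hxle : ∀ n, x n ≤ y + ((2:ℝ) ^ n)⁻¹ := fun n => (min_le_right _ _).trans (hle n)
    have hxt : Tendsto x atTop (𝓝 y) := by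
      have h0 : Tendsto (fun n : ℕ => y + ((2:ℝ) ^ n)⁻¹) atTop (𝓝 (y + 0)) :=
        tendsto_const_nhds.add
          (tendsto_inv_atTop_zero.comp (tendsto_pow_atTop_atTop_of_one_lt one_lt_two))
      rw [add_zero] at h0
      exact tendsto_of_tendsto_of_tendsto_of_le_of_le tendsto_const_nhds h0
        (fun n => (hxy n).le) hxle
    have hxs : Tendsto x atTop (𝓝[Set.Ici y] y) :=
      tendsto_nhdsWithin_of_tendsto_nhds_of_eventually_within x hxt
        (Filter.Eventually.of_forall fun n => (hxy n).le)
    exact (hright y hy).tendsto.comp hxs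
  have haeb : ∀ᵐ z : ℝ, z ≠ b := by
    rw [ae_iff]
    simp only [not_not, Set.setOf_eq_eq_singleton]
    exact measure_singleton b
  have hae : ∀ᵐ z ∂(volume.restrict (Set.Ioc a b)), Tendsto (fun n => g n z) atTop (𝓝 (ω z)) := by
    filter_upwards [ae_restrict_mem measurableSet_Ioc, ae_restrict_of_ae haeb] with z hz hzb
    exact hconv z ⟨hz.1.le, lt_of_le_of_ne hz.2 hzb⟩
  exact aemeasurable_of_tendsto_metrizable_ae atTop (fun n => (hgm n).aemeasurable) hae

/-- Let `a < b` and let `ω : [a,b] → ℝ` be càdlàg (right-continuous on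
`[a,b)` with left limits on `(a,b]`).  Then the Laplace asymptotics
`lim_{c→+∞} (1/c)·log(∫_a^b e^{−c·ω(y)} dy) = sup_{y∈(a,b)} (−ω(y))` holds; in particular,
if `ω` is nonnegative on `[a,b]` with `inf_{(a,b)} ω = 0`, then
`∫_a^b e^{−c·ω(y)} dy = e^{o(c)}` as `c → +∞`. -/
theorem laplace_asymptotics_cadlag
    (a b : ℝ) (hab : a < b) (ω : ℝ → ℝ)
    (hright : ∀ x ∈ Set.Ico a b, ContinuousWithinAt ω (Set.Ici x) x)
    (hleft : ∀ x ∈ Set.Ioc a b, ∃ l : ℝ, Tendsto ω (𝓝[<] x) (𝓝 l)) :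
    Tendsto (fun c : ℝ => c⁻¹ * Real.log (∫ y in a..b, Real.exp (-(c * ω y))))
      atTop (𝓝 (sSup ((fun y => -ω y) '' Set.Ioo a b))) ∧
    ((∀ y ∈ Set.Icc a b, 0 ≤ ω y) → sInf (ω '' Set.Ioo a b) = 0 →
      (fun c : ℝ => Real.log (∫ y in a..b, Real.exp (-(c * ω y))))
        =o[atTop] (fun c : ℝ => c)) := by
  obtain ⟨C, hC⟩ := cadlag_bounded a b ω hright hleft
  have hC0 : 0 ≤ C := le_trans (abs_nonneg _) (hC a ⟨le_refl a, hab.le⟩)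
  have hmeas := cadlag_aemeasurable a b ω hright
  set f : ℝ → ℝ → ℝ := fun c y => Real.exp (-(c * ω y)) with hf
  have hint : ∀ c : ℝ, IntegrableOn (f c) (Set.Ioc a b) := by
    intro c
    have hm : AEStronglyMeasurable (f c) (volume.restrict (Set.Ioc a b)) :=
      (Real.continuous_exp.measurable.comp_aemeasurable
        ((hmeas.const_mul c).neg)).aestronglyMeasurable
    refine Integrable.mono' (integrable_const (Real.exp (|c| * C))) hm ?_
    filter_upwards [ae_restrict_mem measurableSet_Ioc] with y hy
    simp only [hf, Real.norm_eq_abs, Real.abs_exp, Real.exp_le_exp]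
    have h2 : |c * ω y| ≤ |c| * C := by
      rw [abs_mul]
      exact mul_le_mul_of_nonneg_left (hC y (Set.Ioc_subset_Icc_self hy)) (abs_nonneg c)
    linarith [neg_le_abs (c * ω y)]
  set I : ℝ → ℝ := fun c => ∫ y in Set.Ioc a b, f c y with hI
  have hIeq : ∀ c : ℝ, (∫ y in a..b, Real.exp (-(c * ω y))) = I c := fun c =>
    intervalIntegral.integral_of_le hab.le
  have hvol : (volume (Set.Ioc a b)).toReal = b - a := by
    rw [Real.volume_Ioc, ENNReal.toReal_ofReal (by linarith)]
  have hIpos : ∀ c, 0 < I c := by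
    intro c
    have h1 : Real.exp (-(|c| * C)) * (b - a) ≤ I c := by
      have h0 := setIntegral_ge_of_const_le (μ := volume) (f := f c)
        (c := Real.exp (-(|c| * C))) measurableSet_Ioc
        (by rw [Real.volume_Ioc]; exact ENNReal.ofReal_ne_top)
        (fun y hy => by
          simp only [hf, Real.exp_le_exp]
          have h2 : |c * ω y| ≤ |c| * C := by
            rw [abs_mul]
            exact mul_le_mul_of_nonneg_left (hC y (Set.Ioc_subset_Icc_self hy)) (abs_nonneg c)
          linarith [le_abs_self (c * ω y)]) (hint c)
      rwa [measureReal_def, hvol, smul_eq_mul, mul_comm] at h0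
    exact lt_of_lt_of_le (mul_pos (Real.exp_pos _) (by linarith)) h1
  set S := (fun y => -ω y) '' Set.Ioo a b with hS
  have hSne : S.Nonempty := ⟨-ω ((a+b)/2), ⟨(a+b)/2, ⟨by linarith, by linarith⟩, rfl⟩⟩
  have hSbdd : BddAbove S := by
    refine ⟨C, ?_⟩
    rintro z ⟨y, hy, rfl⟩
    exact (neg_le_abs _).trans (hC y (Set.Ioo_subset_Icc_self hy))
  set M := sSup S with hM
  have haeb : ∀ᵐ z : ℝ, z ≠ b := by
    rw [ae_iff]
    simp only [not_not, Set.setOf_eq_eq_singleton]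
    exact measure_singleton b
  have hup : ∀ c : ℝ, 0 ≤ c → Real.log (I c) ≤ c * M + Real.log (b - a) := by
    intro c hc
    have hae : ∀ᵐ y ∂(volume.restrict (Set.Ioc a b)), f c y ≤ Real.exp (c * M) := by
      filter_upwards [ae_restrict_mem measurableSet_Ioc, ae_restrict_of_ae haeb] with y hy hyb
      have hyo : y ∈ Set.Ioo a b := ⟨hy.1, lt_of_le_of_ne hy.2 hyb⟩
      simp only [hf, Real.exp_le_exp]
      have hle : -ω y ≤ M := le_csSup hSbdd ⟨y, hyo, rfl⟩
      calc -(c * ω y) = c * (-ω y) := by ring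
        _ ≤ c * M := mul_le_mul_of_nonneg_left hle hc
    have h1 : I c ≤ Real.exp (c * M) * (b - a) := by
      have h2 : I c ≤ ∫ _ in Set.Ioc a b, Real.exp (c * M) :=
        integral_mono_ae (hint c) (integrable_const _) hae
      rwa [setIntegral_const, smul_eq_mul, measureReal_def, hvol, mul_comm] at h2
    calc Real.log (I c) ≤ Real.log (Real.exp (c * M) * (b - a)) :=
          Real.log_le_log (hIpos c) h1
      _ = c * M + Real.log (b - a) := by
          rw [Real.log_mul (Real.exp_ne_zero _) (by linarith), Real.log_exp]
  have hlow : ∀ ε : ℝ, 0 < ε → ∃ k : ℝ, 0 < k ∧ ∀ c : ℝ, 0 ≤ c →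
      (M - 2*ε) * c + Real.log k ≤ Real.log (I c) := by
    intro ε hε
    obtain ⟨z, hz, hzlt⟩ := exists_lt_of_lt_csSup hSne (show M - ε < M by linarith)
    simp only [hS, Set.mem_image] at hz
    obtain ⟨y0, hy0, rfl⟩ := hz
    have hcw := hright y0 ⟨hy0.1.le, hy0.2⟩
    have hmem : {y | ω y < ω y0 + ε} ∈ 𝓝[≥] y0 := hcw (Iio_mem_nhds (by linarith))
    obtain ⟨u, hu, hsub⟩ := mem_nhdsGE_iff_exists_Ico_subset.1 hmem
    rw [Set.mem_Ioi] at hu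
    set d := min u b with hd
    have hy0d : y0 < d := lt_min hu hy0.2
    set m := (y0 + d) / 2 with hm
    have h1 : y0 < m := by rw [hm]; linarith
    have h2 : m < d := by rw [hm]; linarith
    have hmb : m ≤ b := le_of_lt (lt_of_lt_of_le h2 (min_le_right u b))
    refine ⟨m - y0, by linarith, fun c hc => ?_⟩
    have hsub2 : Set.Ioc y0 m ⊆ Set.Ioc a b := Set.Ioc_subset_Ioc hy0.1.le hmb
    have hbound : ∀ y ∈ Set.Ioc y0 m, Real.exp ((M - 2*ε) * c) ≤ f c y := by
      intro y hy
      have hω : ω y < ω y0 + ε :=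
        hsub ⟨hy.1.le, lt_of_le_of_lt hy.2 (lt_of_lt_of_le h2 (min_le_left u b))⟩
      simp only [hf, Real.exp_le_exp]
      have hge : M - 2*ε ≤ -ω y := by linarith
      calc (M - 2*ε) * c ≤ (-ω y) * c := mul_le_mul_of_nonneg_right hge hc
        _ = -(c * ω y) := by ring
    have h3 : Real.exp ((M - 2*ε)*c) * (m - y0) ≤ ∫ y in Set.Ioc y0 m, f c y := by
      have h0 := setIntegral_ge_of_const_le (μ := volume) measurableSet_Ioc
        (by rw [Real.volume_Ioc]; exact ENNReal.ofReal_ne_top) hbound ((hint c).mono_set hsub2)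
      rwa [measureReal_def, Real.volume_Ioc, ENNReal.toReal_ofReal (by linarith), smul_eq_mul, mul_comm] at h0
    have h4 : (∫ y in Set.Ioc y0 m, f c y) ≤ I c :=
      setIntegral_mono_set (hint c)
        (Filter.Eventually.of_forall fun y => (Real.exp_pos _).le)
        (HasSubset.Subset.eventuallyLE hsub2)
    calc (M - 2*ε) * c + Real.log (m - y0)
        = Real.log (Real.exp ((M - 2*ε)*c) * (m - y0)) := by
          rw [Real.log_mul (Real.exp_ne_zero _) (by linarith), Real.log_exp]
      _ ≤ Real.log (I c) := Real.log_le_log (mul_pos (Real.exp_pos _) (by linarith)) (h3.trans h4)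
  have hmain : Tendsto (fun c : ℝ => c⁻¹ * Real.log (I c)) atTop (𝓝 M) := by
    rw [tendsto_order]
    constructor
    · intro x hx
      set ε := (M - x) / 3 with hε
      have hε0 : 0 < ε := by rw [hε]; linarith
      obtain ⟨k, hk, hlk⟩ := hlow ε hε0
      have ht : Tendsto (fun c : ℝ => c⁻¹ * Real.log k) atTop (𝓝 0) := by
        simpa using tendsto_inv_atTop_zero.mul_const (Real.log k)
      have hev : ∀ᶠ c : ℝ in atTop, -ε < c⁻¹ * Real.log k :=
        ht.eventually (eventually_gt_nhds (by linarith))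
      filter_upwards [hev, eventually_gt_atTop (0:ℝ)] with c hc1 hc2
      have h6 : c⁻¹ * ((M - 2*ε)*c + Real.log k) ≤ c⁻¹ * Real.log (I c) :=
        mul_le_mul_of_nonneg_left (hlk c hc2.le) (inv_nonneg.2 hc2.le)
      have h7 : c⁻¹ * ((M - 2*ε)*c + Real.log k) = (M - 2*ε) + c⁻¹ * Real.log k := by
        field_simp
      rw [h7] at h6
      have hx3 : x = M - 3*ε := by rw [hε]; ring
      linarith
    · intro x hx
      have ht : Tendsto (fun c : ℝ => c⁻¹ * Real.log (b-a)) atTop (𝓝 0) := by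
        simpa using tendsto_inv_atTop_zero.mul_const (Real.log (b-a))
      have hev : ∀ᶠ c : ℝ in atTop, c⁻¹ * Real.log (b-a) < x - M :=
        ht.eventually (eventually_lt_nhds (by linarith))
      filter_upwards [hev, eventually_gt_atTop (0:ℝ)] with c hc1 hc2
      have h6 : c⁻¹ * Real.log (I c) ≤ c⁻¹ * (c * M + Real.log (b-a)) :=
        mul_le_mul_of_nonneg_left (hup c hc2.le) (inv_nonneg.2 hc2.le)
      have h7 : c⁻¹ * (c * M + Real.log (b-a)) = M + c⁻¹ * Real.log (b-a) := by
        field_simp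
      rw [h7] at h6
      linarith
  have hmain' : Tendsto (fun c : ℝ => c⁻¹ * Real.log (∫ y in a..b, Real.exp (-(c * ω y))))
      atTop (𝓝 M) := by
    simpa only [hIeq] using hmain
  refine ⟨hmain', fun _ hinf => ?_⟩
  have hM0 : M = 0 := by
    have himg : S = -(ω '' Set.Ioo a b) := by
      ext z
      simp only [hS, Set.mem_image, Set.mem_neg]
      constructor
      · rintro ⟨y, hy, rfl⟩; exact ⟨y, hy, by ring⟩
      · rintro ⟨y, hy, hyz⟩; exact ⟨y, hy, by linarith⟩
    rw [hM, himg, show sSup (-(ω '' Set.Ioo a b)) = -sInf (ω '' Set.Ioo a b) by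
      rw [Real.sInf_def, neg_neg], hinf, neg_zero]
  rw [hM0] at hmain'
  rw [Asymptotics.isLittleO_iff_tendsto' ?h0]
  · simpa [div_eq_inv_mul] using hmain'
  case h0 =>
    filter_upwards [eventually_ne_atTop (0:ℝ)] with c hc h
    exact absurd h hc
end

section
/- Let ω : ℝ → ℝ be a nonnegative càdlàg function with ω(0) = 0, which is continuous at its local extrema, and for which 0 is the unique minimum point, i.e. ω(y) ∧ ω(y−) > 0 for every y ≠ 0. Then for all real numbers a ≤ α < 0 < β ≤ b, the ratio ( ∫_a^b e^{−c·ω(y)} dy ) / ( ∫_α^β e^{−c·ω(y)} dy ) converges to 1 as c → +∞. -/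
open Filter Set Topology Function


lemma cadlag_measurable (ω : ℝ → ℝ)
    (hR : ∀ x : ℝ, ContinuousWithinAt ω (Set.Ici x) x) : Measurable ω := by
  apply measurable_of_tendsto_metrizable'
    (f := fun n : ℕ => fun x : ℝ => ω ((⌈x * 2 ^ n⌉ : ℝ) / 2 ^ n)) atTop
  · intro n
    exact (measurable_of_countable (fun k : ℤ => ω ((k : ℝ) / 2 ^ n))).comp
      (Int.measurable_ceil.comp (measurable_id.mul_const _))
  · rw [tendsto_pi_nhds]
    intro x
    have hpow : ∀ n : ℕ, (0:ℝ) < 2 ^ n := fun n => by positivity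
    have h2 : ∀ n : ℕ, x ≤ (⌈x * 2 ^ n⌉ : ℝ) / 2 ^ n := by
      intro n
      rw [le_div_iff₀ (hpow n)]
      exact Int.le_ceil _
    have h3 : ∀ n : ℕ, (⌈x * 2 ^ n⌉ : ℝ) / 2 ^ n ≤ x + (1/2) ^ n := by
      intro n
      rw [div_le_iff₀ (hpow n)]
      have := (Int.ceil_lt_add_one (x * 2 ^ n)).le
      have he : (x + (1/2) ^ n) * 2 ^ n = x * 2 ^ n + 1 := by
        have : ((1:ℝ)/2) ^ n * 2 ^ n = 1 := by
          rw [← mul_pow]; norm_num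
        ring_nf
        ring_nf at this
        nlinarith [this]
      rw [he]; exact this
    have h1 : Tendsto (fun n : ℕ => (⌈x * 2 ^ n⌉ : ℝ) / 2 ^ n) atTop (𝓝 x) := by
      have hup : Tendsto (fun n : ℕ => x + (1/2:ℝ) ^ n) atTop (𝓝 x) := by
        have := tendsto_pow_atTop_nhds_zero_of_lt_one (by norm_num : (0:ℝ) ≤ 1/2)
          (by norm_num : (1/2:ℝ) < 1)
        simpa using tendsto_const_nhds.add this
      exact tendsto_of_tendsto_of_tendsto_of_le_of_le tendsto_const_nhds hup h2 h3
    exact (hR x).tendsto.comp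
      (tendsto_nhdsWithin_of_tendsto_nhds_of_eventually_within _ h1
        (Eventually.of_forall h2))


lemma exists_pos_lb (ω : ℝ → ℝ)
    (hR : ∀ x : ℝ, ContinuousWithinAt ω (Set.Ici x) x)
    (hL : ∀ x : ℝ, ∃ l : ℝ, Tendsto ω (𝓝[<] x) (𝓝 l))
    (hmin : ∀ y : ℝ, y ≠ 0 → 0 < min (ω y) (Function.leftLim ω y))
    (K : Set ℝ) (hK : IsCompact K) (h0 : (0:ℝ) ∉ K) (hne : K.Nonempty) :
    ∃ m > (0:ℝ), ∀ x ∈ K, m ≤ ω x := by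
  have key : ∀ y : K, ∃ r : ℝ, 0 < r ∧ ∀ᶠ x in 𝓝 (y:ℝ), r < ω x := by
    rintro ⟨y, hy⟩
    have hy0 : y ≠ 0 := fun h => h0 (h ▸ hy)
    have hpos := hmin y hy0
    obtain ⟨l, hl⟩ := hL y
    have hll : Function.leftLim ω y = l :=
      leftLim_eq_of_tendsto hl
    set r := min (ω y) (Function.leftLim ω y) / 2 with hr
    refine ⟨r, by linarith, ?_⟩
    have hrω : r < ω y := by
      have : min (ω y) (Function.leftLim ω y) ≤ ω y := min_le_left _ _
      linarith
    have hrl : r < l := by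
      have : min (ω y) (Function.leftLim ω y) ≤ l := hll ▸ min_le_right _ _
      linarith
    have hright : ∀ᶠ x in 𝓝[≥] (y:ℝ), r < ω x :=
      (hR y).tendsto.eventually (eventually_gt_nhds hrω)
    have hleft : ∀ᶠ x in 𝓝[<] (y:ℝ), r < ω x :=
      hl.eventually (eventually_gt_nhds hrl)
    rw [← nhdsLT_sup_nhdsGE (y:ℝ)]
    exact eventually_sup.2 ⟨hleft, hright⟩
  choose r hr hU using key
  obtain ⟨t, ht⟩ := hK.elim_nhds_subcover' (fun y hy => {x | r ⟨y, hy⟩ < ω x})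
    (fun y hy => hU ⟨y, hy⟩)
  have htne : t.Nonempty := by
    obtain ⟨x0, hx0⟩ := hne
    have := ht hx0
    simp only [Set.mem_iUnion] at this
    obtain ⟨y, hyt, -⟩ := this
    exact ⟨y, hyt⟩
  refine ⟨t.inf' htne (fun y => r y), ?_, ?_⟩
  · rw [gt_iff_lt, Finset.lt_inf'_iff]
    exact fun y _ => hr y
  · intro x hx
    have := ht hx
    simp only [Set.mem_iUnion, Set.mem_setOf_eq] at this
    obtain ⟨y, hyt, hxy⟩ := this
    exact le_of_lt (lt_of_le_of_lt (Finset.inf'_le _ hyt) hxy)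

/-- A function `ω : ℝ → ℝ` is càdlàg: right-continuous everywhere, with left limits
everywhere. `ω(x−)` is then `Function.leftLim ω x`. -/
def Cadlag (ω : ℝ → ℝ) : Prop :=
  (∀ x : ℝ, ContinuousWithinAt ω (Set.Ici x) x) ∧
  (∀ x : ℝ, ∃ l : ℝ, Tendsto ω (𝓝[<] x) (𝓝 l))

/-- `x0` is a left local maximum of `ω`. -/
def LeftLocalMax (ω : ℝ → ℝ) (x0 : ℝ) : Prop :=
  ∃ ε > (0 : ℝ), ∀ x ∈ Set.Ioo (x0 - ε) x0, ω x ≤ Function.leftLim ω x0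

/-- `x0` is a right local maximum of `ω`. -/
def RightLocalMax (ω : ℝ → ℝ) (x0 : ℝ) : Prop :=
  ∃ ε > (0 : ℝ), ∀ x ∈ Set.Ioo x0 (x0 + ε), ω x ≤ ω x0

/-- `x0` is a left local minimum of `ω`. -/
def LeftLocalMin (ω : ℝ → ℝ) (x0 : ℝ) : Prop :=
  ∃ ε > (0 : ℝ), ∀ x ∈ Set.Ioo (x0 - ε) x0, Function.leftLim ω x0 ≤ ω x

/-- `x0` is a right local minimum of `ω`. -/
def RightLocalMin (ω : ℝ → ℝ) (x0 : ℝ) : Prop :=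
  ∃ ε > (0 : ℝ), ∀ x ∈ Set.Ioo x0 (x0 + ε), ω x0 ≤ ω x

/-- `x0` is a local extremum of `ω`. -/
def LocalExtremum (ω : ℝ → ℝ) (x0 : ℝ) : Prop :=
  LeftLocalMax ω x0 ∨ RightLocalMax ω x0 ∨ LeftLocalMin ω x0 ∨ RightLocalMin ω x0

/-- `ω` is continuous at its local extrema. -/
def ContinuousAtLocalExtrema (ω : ℝ → ℝ) : Prop :=
  ∀ x0 : ℝ, LocalExtremum ω x0 → ω x0 = Function.leftLim ω x0

/-- Let `ω : ℝ → ℝ` be a nonnegative càdlàg function with `ω 0 = 0`,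
continuous at its local extrema, with `0` the unique minimum point
(`ω(y) ∧ ω(y−) > 0` for `y ≠ 0`).  Then for all `a ≤ α < 0 < β ≤ b`,
`(∫_a^b e^{−c·ω(y)} dy) / (∫_α^β e^{−c·ω(y)} dy) → 1` as `c → +∞`. -/
theorem integral_ratio_tendsto_one
    (ω : ℝ → ℝ) (hcad : Cadlag ω) (hnonneg : ∀ y : ℝ, 0 ≤ ω y) (h0 : ω 0 = 0)
    (hext : ContinuousAtLocalExtrema ω)
    (hmin : ∀ y : ℝ, y ≠ 0 → 0 < min (ω y) (Function.leftLim ω y))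
    (a α β b : ℝ) (h1 : a ≤ α) (h2 : α < 0) (h3 : 0 < β) (h4 : β ≤ b) :
    Tendsto (fun c : ℝ =>
        (∫ y in a..b, Real.exp (-(c * ω y))) / (∫ y in α..β, Real.exp (-(c * ω y))))
      atTop (𝓝 1) := by
  
  have hmeas : Measurable ω := cadlag_measurable ω hcad.1
  -- positive lower bound of ω away from 0
  obtain ⟨m, hm, hmK⟩ := exists_pos_lb ω hcad.1 hcad.2 hmin (Icc a α ∪ Icc β b)
    (isCompact_Icc.union isCompact_Icc)
    (by
      rintro (h | h)
      · exact absurd h.2 (not_le.2 h2)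
      · exact absurd h.1 (not_le.2 h3))
    ⟨α, Or.inl ⟨h1, le_refl α⟩⟩
  -- small interval near 0 where ω < m/2
  have hδ' : ∀ᶠ x in 𝓝[≥] (0:ℝ), ω x < m / 2 := by
    have hT := (hcad.1 0).tendsto
    rw [h0] at hT
    exact hT.eventually (eventually_lt_nhds (by linarith))
  obtain ⟨u, hu, husub⟩ := mem_nhdsGE_iff_exists_Ico_subset.1 hδ'
  rw [Set.mem_Ioi] at hu
  set δ : ℝ := min u β / 2 with hδdef
  have hminuβ : 0 < min u β := lt_min hu h3
  have hδpos : 0 < δ := by simp only [hδdef]; linarith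
  have hδβ : δ ≤ β := by
    have : min u β ≤ β := min_le_right _ _
    simp only [hδdef]; linarith
  have hδω : ∀ x ∈ Icc (0:ℝ) δ, ω x ≤ m / 2 := by
    intro x hx
    refine le_of_lt (husub ⟨hx.1, ?_⟩)
    have h5 : min u β ≤ u := min_le_left _ _
    have : δ < min u β := by simp only [hδdef]; linarith
    linarith [hx.2]
  -- integrability
  have hmexp : Measurable fun c : ℝ => True := measurable_const
  have hint : ∀ c : ℝ, 0 ≤ c → ∀ p q : ℝ,
      IntervalIntegrable (fun y => Real.exp (-(c * ω y))) MeasureTheory.volume p q := by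
    intro c hc p q
    apply (intervalIntegrable_const (c := (1:ℝ))).mono_fun
    · exact (Real.measurable_exp.comp ((measurable_const.mul hmeas).neg)).aestronglyMeasurable
    · apply Eventually.of_forall
      intro x
      simp only [Real.norm_eq_abs, norm_one, abs_of_pos (Real.exp_pos _)]
      rw [Real.exp_le_one_iff]
      have := mul_nonneg hc (hnonneg x)
      linarith
  set S : ℝ := (α - a) + (b - β) with hSdef
  have hS : 0 ≤ S := by simp only [hSdef]; linarith
  set D : ℝ := S / δ with hDdef
  have hD : 0 ≤ D := div_nonneg hS hδpos.le
  apply tendsto_of_tendsto_of_tendsto_of_le_of_le' (g := fun _ : ℝ => (1:ℝ))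
    (h := fun c : ℝ => 1 + D * Real.exp (-(c * (m / 2)))) tendsto_const_nhds
  · -- upper function tends to 1
    have hbot : Tendsto (fun c : ℝ => -(c * (m / 2))) atTop atBot := by
      apply tendsto_neg_atTop_atBot.comp
      exact Tendsto.atTop_mul_const (by linarith) tendsto_id
    have hexp : Tendsto (fun c : ℝ => Real.exp (-(c * (m / 2)))) atTop (𝓝 0) :=
      Real.tendsto_exp_atBot.comp hbot
    have h7 : Tendsto (fun c : ℝ => 1 + D * Real.exp (-(c * (m / 2)))) atTop
        (𝓝 (1 + D * 0)) := tendsto_const_nhds.add (hexp.const_mul D)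
    simpa using h7
  · -- 1 ≤ ratio, eventually
    filter_upwards [eventually_ge_atTop (0:ℝ)] with c hc
    have hfi := hint c hc
    have hJ1 : (∫ y in α..β, Real.exp (-(c * ω y)))
        = (∫ y in α..(0:ℝ), Real.exp (-(c * ω y)))
          + ((∫ y in (0:ℝ)..δ, Real.exp (-(c * ω y)))
            + (∫ y in δ..β, Real.exp (-(c * ω y)))) := by
      rw [intervalIntegral.integral_add_adjacent_intervals (hfi 0 δ) (hfi δ β),
          intervalIntegral.integral_add_adjacent_intervals (hfi α 0) (hfi 0 β)]
    have hJ0δ : δ * Real.exp (-(c * (m / 2))) ≤ ∫ y in (0:ℝ)..δ, Real.exp (-(c * ω y)) := by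
      have hmono := intervalIntegral.integral_mono_on hδpos.le
        (intervalIntegrable_const (c := Real.exp (-(c * (m / 2))))) (hfi 0 δ)
        (fun x hx => by
          apply Real.exp_le_exp.2
          have h6 := mul_le_mul_of_nonneg_left (hδω x hx) hc
          linarith)
      simpa [intervalIntegral.integral_const, smul_eq_mul, sub_zero, mul_comm] using hmono
    have hn1 : 0 ≤ ∫ y in α..(0:ℝ), Real.exp (-(c * ω y)) :=
      intervalIntegral.integral_nonneg h2.le (fun x _ => (Real.exp_pos _).le)
    have hn3 : 0 ≤ ∫ y in δ..β, Real.exp (-(c * ω y)) :=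
      intervalIntegral.integral_nonneg hδβ (fun x _ => (Real.exp_pos _).le)
    have hJlb : δ * Real.exp (-(c * (m / 2))) ≤ ∫ y in α..β, Real.exp (-(c * ω y)) := by
      rw [hJ1]; linarith
    have hJpos : 0 < ∫ y in α..β, Real.exp (-(c * ω y)) :=
      lt_of_lt_of_le (by positivity) hJlb
    have hI1 : (∫ y in a..b, Real.exp (-(c * ω y)))
        = (∫ y in a..α, Real.exp (-(c * ω y)))
          + ((∫ y in α..β, Real.exp (-(c * ω y)))
            + (∫ y in β..b, Real.exp (-(c * ω y)))) := by
      rw [intervalIntegral.integral_add_adjacent_intervals (hfi α β) (hfi β b),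
          intervalIntegral.integral_add_adjacent_intervals (hfi a α) (hfi α b)]
    have hA0 : 0 ≤ ∫ y in a..α, Real.exp (-(c * ω y)) :=
      intervalIntegral.integral_nonneg h1 (fun x _ => (Real.exp_pos _).le)
    have hB0 : 0 ≤ ∫ y in β..b, Real.exp (-(c * ω y)) :=
      intervalIntegral.integral_nonneg h4 (fun x _ => (Real.exp_pos _).le)
    rw [le_div_iff₀ hJpos, one_mul]
    rw [hI1]; linarith
  · -- ratio ≤ upper, eventually
    filter_upwards [eventually_ge_atTop (0:ℝ)] with c hc
    have hfi := hint c hc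
    have hJ1 : (∫ y in α..β, Real.exp (-(c * ω y)))
        = (∫ y in α..(0:ℝ), Real.exp (-(c * ω y)))
          + ((∫ y in (0:ℝ)..δ, Real.exp (-(c * ω y)))
            + (∫ y in δ..β, Real.exp (-(c * ω y)))) := by
      rw [intervalIntegral.integral_add_adjacent_intervals (hfi 0 δ) (hfi δ β),
          intervalIntegral.integral_add_adjacent_intervals (hfi α 0) (hfi 0 β)]
    have hJ0δ : δ * Real.exp (-(c * (m / 2))) ≤ ∫ y in (0:ℝ)..δ, Real.exp (-(c * ω y)) := by
      have hmono := intervalIntegral.integral_mono_on hδpos.le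
        (intervalIntegrable_const (c := Real.exp (-(c * (m / 2))))) (hfi 0 δ)
        (fun x hx => by
          apply Real.exp_le_exp.2
          have h6 := mul_le_mul_of_nonneg_left (hδω x hx) hc
          linarith)
      simpa [intervalIntegral.integral_const, smul_eq_mul, sub_zero, mul_comm] using hmono
    have hn1 : 0 ≤ ∫ y in α..(0:ℝ), Real.exp (-(c * ω y)) :=
      intervalIntegral.integral_nonneg h2.le (fun x _ => (Real.exp_pos _).le)
    have hn3 : 0 ≤ ∫ y in δ..β, Real.exp (-(c * ω y)) :=
      intervalIntegral.integral_nonneg hδβ (fun x _ => (Real.exp_pos _).le)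
    have hJlb : δ * Real.exp (-(c * (m / 2))) ≤ ∫ y in α..β, Real.exp (-(c * ω y)) := by
      rw [hJ1]; linarith
    have hJpos : 0 < ∫ y in α..β, Real.exp (-(c * ω y)) :=
      lt_of_lt_of_le (by positivity) hJlb
    have hI1 : (∫ y in a..b, Real.exp (-(c * ω y)))
        = (∫ y in a..α, Real.exp (-(c * ω y)))
          + ((∫ y in α..β, Real.exp (-(c * ω y)))
            + (∫ y in β..b, Real.exp (-(c * ω y)))) := by
      rw [intervalIntegral.integral_add_adjacent_intervals (hfi α β) (hfi β b),
          intervalIntegral.integral_add_adjacent_intervals (hfi a α) (hfi α b)]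
    have hA : (∫ y in a..α, Real.exp (-(c * ω y))) ≤ (α - a) * Real.exp (-(c * m)) := by
      have hmono := intervalIntegral.integral_mono_on h1 (hfi a α)
        (intervalIntegrable_const (c := Real.exp (-(c * m))))
        (fun x hx => by
          apply Real.exp_le_exp.2
          have h6 := mul_le_mul_of_nonneg_left (hmK x (Or.inl hx)) hc
          linarith)
      simpa [intervalIntegral.integral_const, smul_eq_mul, mul_comm] using hmono
    have hB : (∫ y in β..b, Real.exp (-(c * ω y))) ≤ (b - β) * Real.exp (-(c * m)) := by
      have hmono := intervalIntegral.integral_mono_on h4 (hfi β b)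
        (intervalIntegrable_const (c := Real.exp (-(c * m))))
        (fun x hx => by
          apply Real.exp_le_exp.2
          have h6 := mul_le_mul_of_nonneg_left (hmK x (Or.inr hx)) hc
          linarith)
      simpa [intervalIntegral.integral_const, smul_eq_mul, mul_comm] using hmono
    rw [div_le_iff₀ hJpos]
    have hkey : S * Real.exp (-(c * m))
        ≤ (D * Real.exp (-(c * (m / 2)))) * ∫ y in α..β, Real.exp (-(c * ω y)) := by
      have hDe : 0 ≤ D * Real.exp (-(c * (m / 2))) :=
        mul_nonneg hD (Real.exp_pos _).le
      have ha' := mul_le_mul_of_nonneg_left hJlb hDe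
      have hb' : S * Real.exp (-(c * m))
          = (D * Real.exp (-(c * (m / 2)))) * (δ * Real.exp (-(c * (m / 2)))) := by
        rw [show -(c * m) = -(c * (m / 2)) + -(c * (m / 2)) by ring, Real.exp_add, hDdef]
        field_simp
      linarith
    have : (∫ y in a..b, Real.exp (-(c * ω y)))
        ≤ (∫ y in α..β, Real.exp (-(c * ω y))) + S * Real.exp (-(c * m)) := by
      rw [hI1]; simp only [hSdef]; nlinarith [hA, hB]
    nlinarith [this, hkey]
end

section
/- Let a < b be real numbers and let ω : [a,b] → ℝ be càdlàg and continuous at its local extrema. Then the supremum and the infimum of ω on [a,b] are attained: there exist x, y ∈ [a,b] such that sup_{t∈[a,b]} ω(t) = ω(x) and inf_{t∈[a,b]} ω(t) = ω(y). -/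
open Filter Set Topology Function

/-- `x0` is a left local maximum of `ω` relative to the interval `[a,b]`. -/
def LeftLocalMaxOn (ω : ℝ → ℝ) (a b x0 : ℝ) : Prop :=
  ∃ ε > (0 : ℝ), ∀ x ∈ Set.Ioo (x0 - ε) x0 ∩ Set.Icc a b, ω x ≤ Function.leftLim ω x0

/-- `x0` is a right local maximum of `ω` relative to the interval `[a,b]`. -/
def RightLocalMaxOn (ω : ℝ → ℝ) (a b x0 : ℝ) : Prop :=
  ∃ ε > (0 : ℝ), ∀ x ∈ Set.Ioo x0 (x0 + ε) ∩ Set.Icc a b, ω x ≤ ω x0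

/-- `x0` is a left local minimum of `ω` relative to the interval `[a,b]`. -/
def LeftLocalMinOn (ω : ℝ → ℝ) (a b x0 : ℝ) : Prop :=
  ∃ ε > (0 : ℝ), ∀ x ∈ Set.Ioo (x0 - ε) x0 ∩ Set.Icc a b, Function.leftLim ω x0 ≤ ω x

/-- `x0` is a right local minimum of `ω` relative to the interval `[a,b]`. -/
def RightLocalMinOn (ω : ℝ → ℝ) (a b x0 : ℝ) : Prop :=
  ∃ ε > (0 : ℝ), ∀ x ∈ Set.Ioo x0 (x0 + ε) ∩ Set.Icc a b, ω x0 ≤ ω x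

/-- `x0` is a local extremum of `ω` relative to the interval `[a,b]` (left notions
require `x0 ∈ (a,b]`, right notions require `x0 ∈ [a,b)`). -/
def LocalExtremumOn (ω : ℝ → ℝ) (a b x0 : ℝ) : Prop :=
  (x0 ∈ Set.Ioc a b ∧ (LeftLocalMaxOn ω a b x0 ∨ LeftLocalMinOn ω a b x0)) ∨
  (x0 ∈ Set.Ico a b ∧ (RightLocalMaxOn ω a b x0 ∨ RightLocalMinOn ω a b x0))

lemma cadlag_cluster (a b : ℝ) (ω : ℝ → ℝ)
    (hright : ∀ x ∈ Set.Ico a b, ContinuousWithinAt ω (Set.Ici x) x)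
    (hleft : ∀ x ∈ Set.Ioc a b, ∃ l : ℝ, Tendsto ω (𝓝[<] x) (𝓝 l))
    (x0 : ℝ) (hx0 : x0 ∈ Set.Icc a b) (u : ℕ → ℝ) (hu : ∀ n, u n ∈ Set.Icc a b)
    (hlim : Tendsto u atTop (𝓝 x0)) :
    ∃ φ : ℕ → ℕ, StrictMono φ ∧
      (Tendsto (ω ∘ u ∘ φ) atTop (𝓝 (ω x0)) ∨
       (x0 ∈ Set.Ioc a b ∧ Tendsto (ω ∘ u ∘ φ) atTop (𝓝 (Function.leftLim ω x0)))) := by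
  by_cases h : ∃ᶠ n in atTop, x0 ≤ u n
  · obtain ⟨φ, hφ, hP⟩ := extraction_of_frequently_atTop h
    refine ⟨φ, hφ, Or.inl ?_⟩
    have hsub : Tendsto (u ∘ φ) atTop (𝓝 x0) := hlim.comp hφ.tendsto_atTop
    rcases eq_or_lt_of_le hx0.2 with hb | hb
    · have he : ∀ n, u (φ n) = x0 := fun n => le_antisymm (hb ▸ (hu (φ n)).2) (hP n)
      have : (ω ∘ u ∘ φ) = fun _ => ω x0 := funext fun n => by
        simp only [Function.comp_apply, he n]
      rw [this]; exact tendsto_const_nhds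
    · have hcont := hright x0 ⟨hx0.1, hb⟩
      have h2 : Tendsto (u ∘ φ) atTop (𝓝[Set.Ici x0] x0) :=
        tendsto_nhdsWithin_of_tendsto_nhds_of_eventually_within _ hsub (Eventually.of_forall hP)
      exact hcont.tendsto.comp h2
  · rw [not_frequently] at h
    have h' : ∀ᶠ n in atTop, u n < x0 := h.mono fun n hn => lt_of_not_ge hn
    obtain ⟨φ, hφ, hP⟩ := extraction_of_eventually_atTop h'
    have hx0a : a < x0 := lt_of_le_of_lt (hu (φ 0)).1 (hP 0)
    obtain ⟨l, hl⟩ := hleft x0 ⟨hx0a, hx0.2⟩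
    have hll : Function.leftLim ω x0 = l :=
      leftLim_eq_of_tendsto (h := nhdsLT_neBot x0) hl
    have hsub : Tendsto (u ∘ φ) atTop (𝓝 x0) := hlim.comp hφ.tendsto_atTop
    have h2 : Tendsto (u ∘ φ) atTop (𝓝[<] x0) :=
      tendsto_nhdsWithin_of_tendsto_nhds_of_eventually_within _ hsub (Eventually.of_forall hP)
    exact ⟨φ, hφ, Or.inr ⟨⟨hx0a, hx0.2⟩, hll ▸ hl.comp h2⟩⟩

/-- Any limit of values of ω along a sequence in [a,b] is ω x0 or leftLim ω x0 for some x0. -/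
lemma cadlag_limit_point (a b : ℝ) (ω : ℝ → ℝ)
    (hright : ∀ x ∈ Set.Ico a b, ContinuousWithinAt ω (Set.Ici x) x)
    (hleft : ∀ x ∈ Set.Ioc a b, ∃ l : ℝ, Tendsto ω (𝓝[<] x) (𝓝 l))
    (v : ℕ → ℝ) (hv : ∀ n, v n ∈ Set.Icc a b) (c : ℝ)
    (hc : Tendsto (ω ∘ v) atTop (𝓝 c)) :
    ∃ x0 ∈ Set.Icc a b, c = ω x0 ∨ (x0 ∈ Set.Ioc a b ∧ c = Function.leftLim ω x0) := by
  obtain ⟨x0, hx0, φ, hφ, hconv⟩ := isCompact_Icc.tendsto_subseq hv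
  obtain ⟨ψ, hψ, hcase⟩ := cadlag_cluster a b ω hright hleft x0 hx0 (v ∘ φ)
    (fun n => hv (φ n)) hconv
  have hc' : Tendsto (ω ∘ (v ∘ φ) ∘ ψ) atTop (𝓝 c) :=
    hc.comp ((hφ.comp hψ).tendsto_atTop)
  rcases hcase with h | ⟨hIoc, h⟩
  · exact ⟨x0, hx0, Or.inl (tendsto_nhds_unique hc' h)⟩
  · exact ⟨x0, hx0, Or.inr ⟨hIoc, tendsto_nhds_unique hc' h⟩⟩

/-- Let `a < b` and let `ω : [a,b] → ℝ` be càdlàg and continuous at its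
local extrema.  Then the supremum and the infimum of `ω` on `[a,b]` are attained. -/
theorem cadlag_continuous_at_extrema_sup_inf_attained
    (a b : ℝ) (hab : a < b) (ω : ℝ → ℝ)
    (hright : ∀ x ∈ Set.Ico a b, ContinuousWithinAt ω (Set.Ici x) x)
    (hleft : ∀ x ∈ Set.Ioc a b, ∃ l : ℝ, Tendsto ω (𝓝[<] x) (𝓝 l))
    (hext : ∀ x0 ∈ Set.Ioc a b, LocalExtremumOn ω a b x0 → ω x0 = Function.leftLim ω x0) :
    (∃ x ∈ Set.Icc a b, sSup (ω '' Set.Icc a b) = ω x) ∧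
    (∃ y ∈ Set.Icc a b, sInf (ω '' Set.Icc a b) = ω y) := by
  have hne : (ω '' Set.Icc a b).Nonempty := ⟨ω a, a, ⟨le_refl a, hab.le⟩, rfl⟩
  -- boundedness above
  have bddA : BddAbove (ω '' Set.Icc a b) := by
    by_contra hB
    rw [not_bddAbove_iff] at hB
    have hch : ∀ n : ℕ, ∃ x, x ∈ Set.Icc a b ∧ (n : ℝ) < ω x := by
      intro n
      obtain ⟨y, ⟨x, hx, rfl⟩, hy⟩ := hB n
      exact ⟨x, hx, hy⟩
    choose u hu hωu using hch
    have htop : Tendsto (ω ∘ u) atTop atTop :=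
      tendsto_atTop_mono (fun n => (hωu n).le) tendsto_natCast_atTop_atTop
    obtain ⟨x0, hx0, φ, hφ, hconv⟩ := isCompact_Icc.tendsto_subseq hu
    obtain ⟨ψ, hψ, hcase⟩ := cadlag_cluster a b ω hright hleft x0 hx0 (u ∘ φ)
      (fun n => hu (φ n)) hconv
    have htop2 : Tendsto (ω ∘ (u ∘ φ) ∘ ψ) atTop atTop :=
      htop.comp ((hφ.comp hψ).tendsto_atTop)
    rcases hcase with h | ⟨_, h⟩
    · exact not_tendsto_atTop_of_tendsto_nhds h htop2
    · exact not_tendsto_atTop_of_tendsto_nhds h htop2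
  -- boundedness below
  have bddB : BddBelow (ω '' Set.Icc a b) := by
    by_contra hB
    rw [not_bddBelow_iff] at hB
    have hch : ∀ n : ℕ, ∃ x, x ∈ Set.Icc a b ∧ ω x < -(n : ℝ) := by
      intro n
      obtain ⟨y, ⟨x, hx, rfl⟩, hy⟩ := hB (-(n : ℝ))
      exact ⟨x, hx, hy⟩
    choose u hu hωu using hch
    have htop : Tendsto (ω ∘ u) atTop atBot := by
      apply tendsto_atBot_mono (fun n => (hωu n).le)
      exact tendsto_neg_atBot_iff.mpr tendsto_natCast_atTop_atTop
    obtain ⟨x0, hx0, φ, hφ, hconv⟩ := isCompact_Icc.tendsto_subseq hu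
    obtain ⟨ψ, hψ, hcase⟩ := cadlag_cluster a b ω hright hleft x0 hx0 (u ∘ φ)
      (fun n => hu (φ n)) hconv
    have htop2 : Tendsto (ω ∘ (u ∘ φ) ∘ ψ) atTop atBot :=
      htop.comp ((hφ.comp hψ).tendsto_atTop)
    rcases hcase with h | ⟨_, h⟩
    · exact not_tendsto_atBot_of_tendsto_nhds h htop2
    · exact not_tendsto_atBot_of_tendsto_nhds h htop2
  constructor
  · -- sup attained
    obtain ⟨s, _, hs_tend, hs_mem⟩ := exists_seq_tendsto_sSup hne bddA
    have hch : ∀ n : ℕ, ∃ x, x ∈ Set.Icc a b ∧ ω x = s n := fun n => hs_mem n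
    choose v hv hωv using hch
    have hc : Tendsto (ω ∘ v) atTop (𝓝 (sSup (ω '' Set.Icc a b))) := by
      have : (ω ∘ v) = s := funext fun n => hωv n
      rw [this]; exact hs_tend
    obtain ⟨x0, hx0, hcase⟩ := cadlag_limit_point a b ω hright hleft v hv _ hc
    rcases hcase with h | ⟨hIoc, h⟩
    · exact ⟨x0, hx0, h⟩
    · have hmax : LocalExtremumOn ω a b x0 := by
        refine Or.inl ⟨hIoc, Or.inl ⟨1, one_pos, fun x hx => ?_⟩⟩
        rw [← h]
        exact le_csSup bddA ⟨x, hx.2, rfl⟩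
      have := hext x0 hIoc hmax
      exact ⟨x0, hx0, h.trans this.symm⟩
  · -- inf attained
    obtain ⟨s, _, hs_tend, hs_mem⟩ := exists_seq_tendsto_sInf hne bddB
    have hch : ∀ n : ℕ, ∃ x, x ∈ Set.Icc a b ∧ ω x = s n := fun n => hs_mem n
    choose v hv hωv using hch
    have hc : Tendsto (ω ∘ v) atTop (𝓝 (sInf (ω '' Set.Icc a b))) := by
      have : (ω ∘ v) = s := funext fun n => hωv n
      rw [this]; exact hs_tend
    obtain ⟨x0, hx0, hcase⟩ := cadlag_limit_point a b ω hright hleft v hv _ hc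
    rcases hcase with h | ⟨hIoc, h⟩
    · exact ⟨x0, hx0, h⟩
    · have hmin : LocalExtremumOn ω a b x0 := by
        refine Or.inl ⟨hIoc, Or.inr ⟨1, one_pos, fun x hx => ?_⟩⟩
        rw [← h]
        exact csInf_le bddB ⟨x, hx.2, rfl⟩
      have := hext x0 hIoc hmin
      exact ⟨x0, hx0, h.trans this.symm⟩
end

section
/- Let ω : ℝ → ℝ be càdlàg, continuous at its local extrema, and taking pairwise distinct values at its local extrema (if x ≠ y are both local extrema of ω then ω(x) ≠ ω(y)). Then for every c > 0, the set M_c(ω) of c-extrema of ω has no accumulation point in ℝ. -/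
open Filter Set Topology Function

/-- `ω` has a `c`-minimum at `x0`: there are `ξ < x0 < ζ` with
`ω(ξ) ≥ (ω(x0) ∧ ω(x0−)) + c`, `ω(ζ−) ≥ (ω(x0) ∧ ω(x0−)) + c`, and
`ω(x) ∧ ω(x−) > ω(x0) ∧ ω(x0−)` for all `x ∈ (ξ,ζ)`, `x ≠ x0`. -/
def CMinimum (ω : ℝ → ℝ) (c x0 : ℝ) : Prop :=
  ∃ ξ ζ : ℝ, ξ < x0 ∧ x0 < ζ ∧
    min (ω x0) (Function.leftLim ω x0) + c ≤ ω ξ ∧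
    min (ω x0) (Function.leftLim ω x0) + c ≤ Function.leftLim ω ζ ∧
    ∀ x ∈ Set.Ioo ξ ζ, x ≠ x0 →
      min (ω x0) (Function.leftLim ω x0) < min (ω x) (Function.leftLim ω x)

/-- `ω` has a `c`-maximum at `x0` if `−ω` has a `c`-minimum at `x0`. -/
def CMaximum (ω : ℝ → ℝ) (c x0 : ℝ) : Prop :=
  CMinimum (fun x => -ω x) c x0

/-- `M_c(ω)`, the set of `c`-extrema of `ω`. -/
def CExtrema (ω : ℝ → ℝ) (c : ℝ) : Set ℝ :=
  {x : ℝ | CMinimum ω c x ∨ CMaximum ω c x}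


/-- In an interval where `f` stays within `c/4` of a constant, there is at most one
`c`-minimum. -/
lemma uniq_cminimum (f : ℝ → ℝ) (hll : ∀ x : ℝ, ∃ l : ℝ, Tendsto f (𝓝[<] x) (𝓝 l))
    (a b l c : ℝ) (hc : 0 < c)
    (hb : ∀ y ∈ Set.Ioo a b, |f y - l| ≤ c/4) :
    ∀ u ∈ Set.Ioo a b, ∀ v ∈ Set.Ioo a b, CMinimum f c u → CMinimum f c v → u = v := by
  have hL : ∀ y ∈ Set.Ioc a b, |Function.leftLim f y - l| ≤ c/4 := by
    intro y hy
    obtain ⟨l', hl'⟩ := hll y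
    have heq : Function.leftLim f y = l' := leftLim_eq_of_tendsto (h := by
      exact nhdsLT_neBot y) hl'
    rw [heq]
    have hev : ∀ᶠ t in 𝓝[<] y, |f t - l| ≤ c/4 := by
      filter_upwards [Ioo_mem_nhdsLT hy.1] with t ht
      exact hb t ⟨ht.1, lt_of_lt_of_le ht.2 hy.2⟩
    exact le_of_tendsto ((hl'.sub_const l).abs) hev
  have key : ∀ u ∈ Set.Ioo a b, ∀ v ∈ Set.Ioo a b, u < v →
      CMinimum f c u → CMinimum f c v → False := by
    intro u hu v hv huv hmu hmv
    obtain ⟨ξ₁, ζ₁, hξ₁, hζ₁, _, hB₁, hI₁⟩ := hmu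
    obtain ⟨ξ₂, ζ₂, hξ₂, hζ₂, hA₂, _, hI₂⟩ := hmv
    have hfu := hb u hu
    have hLu := hL u ⟨hu.1, hu.2.le⟩
    have hfv := hb v hv
    have hLv := hL v ⟨hv.1, hv.2.le⟩
    rw [abs_sub_le_iff] at hfu hLu hfv hLv
    by_cases hζ : ζ₁ ≤ v
    · have hζI : ζ₁ ∈ Set.Ioc a b := ⟨hu.1.trans hζ₁, hζ.trans hv.2.le⟩
      have hz := hL ζ₁ hζI
      rw [abs_sub_le_iff] at hz
      have h1 : min (f u) (Function.leftLim f u) + c ≤ Function.leftLim f ζ₁ := hB₁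
      rcases le_or_gt (f u) (Function.leftLim f u) with hmin | hmin
      · rw [min_eq_left hmin] at h1; linarith [hz.1, hz.2, hfu.1, hfu.2]
      · rw [min_eq_right hmin.le] at h1; linarith [hz.1, hz.2, hLu.1, hLu.2]
    · push_neg at hζ
      have h12 : min (f u) (Function.leftLim f u) < min (f v) (Function.leftLim f v) :=
        hI₁ v ⟨hξ₁.trans huv, hζ⟩ (ne_of_gt huv)
      by_cases hξ : ξ₂ < u
      · have h21 : min (f v) (Function.leftLim f v) < min (f u) (Function.leftLim f u) :=
          hI₂ u ⟨hξ, huv.trans hζ₂⟩ (ne_of_lt huv)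
        linarith
      · push_neg at hξ
        have hξI : ξ₂ ∈ Set.Ioo a b := ⟨hu.1.trans_le hξ, hξ₂.trans hv.2⟩
        have hz := hb ξ₂ hξI
        rw [abs_sub_le_iff] at hz
        rcases le_or_gt (f v) (Function.leftLim f v) with hmin | hmin
        · rw [min_eq_left hmin] at hA₂; linarith [hz.1, hz.2, hfv.1, hfv.2]
        · rw [min_eq_right hmin.le] at hA₂; linarith [hz.1, hz.2, hLv.1, hLv.2]
  intro u hu v hv hmu hmv
  rcases lt_trichotomy u v with h | h | h
  · exact absurd (key u hu v hv h hmu hmv) not_false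
  · exact h
  · exact absurd (key v hv u hu h hmv hmu) not_false

/-- In an interval where `ω` stays within `c/4` of a constant, there are at most two
`c`-extrema (one `c`-minimum and one `c`-maximum). -/
lemma cextrema_subsingletons (ω : ℝ → ℝ)
    (hll : ∀ x : ℝ, ∃ l : ℝ, Tendsto ω (𝓝[<] x) (𝓝 l))
    (a b l c : ℝ) (hc : 0 < c)
    (hb : ∀ y ∈ Set.Ioo a b, |ω y - l| ≤ c/4) :
    ({y ∈ Set.Ioo a b | CMinimum ω c y} ∪ {y ∈ Set.Ioo a b | CMaximum ω c y}).Finite := by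
  have h1 : {y ∈ Set.Ioo a b | CMinimum ω c y}.Subsingleton := fun u hu v hv =>
    uniq_cminimum ω hll a b l c hc hb u hu.1 v hv.1 hu.2 hv.2
  have hlln : ∀ x : ℝ, ∃ l' : ℝ, Tendsto (fun t => -ω t) (𝓝[<] x) (𝓝 l') := by
    intro x
    obtain ⟨l', h⟩ := hll x
    exact ⟨-l', h.neg⟩
  have hbn : ∀ y ∈ Set.Ioo a b, |(fun t => -ω t) y - (-l)| ≤ c/4 := by
    intro y hy
    have : (fun t => -ω t) y - (-l) = -(ω y - l) := by ring
    rw [this, abs_neg]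
    exact hb y hy
  have h2 : {y ∈ Set.Ioo a b | CMaximum ω c y}.Subsingleton := fun u hu v hv =>
    uniq_cminimum (fun t => -ω t) hlln a b (-l) c hc hbn u hu.1 v hv.1 hu.2 hv.2
  exact (h1.finite).union (h2.finite)

/-- Let `ω : ℝ → ℝ` be càdlàg, continuous at its local extrema, with
pairwise distinct values at its local extrema.  Then for every `c > 0` the set `M_c(ω)`
of `c`-extrema of `ω` has no accumulation point in `ℝ`. -/
theorem cExtrema_no_accumulation_point
    (ω : ℝ → ℝ) (hcad : Cadlag ω)
    (hext : ∀ x0 : ℝ, LocalExtremum ω x0 → ω x0 = Function.leftLim ω x0)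
    (hdist : ∀ x y : ℝ, LocalExtremum ω x → LocalExtremum ω y → x ≠ y → ω x ≠ ω y)
    (c : ℝ) (hc : 0 < c) :
    ∀ x : ℝ, ¬ AccPt x (𝓟 (CExtrema ω c)) := by
  intro x hacc
  obtain ⟨l, hl⟩ := hcad.2 x
  have h4 : (0:ℝ) < c/4 := by linarith
  have hmemL : {y : ℝ | |ω y - l| ≤ c/4} ∈ 𝓝[<] x := by
    filter_upwards [hl (Metric.closedBall_mem_nhds l h4)] with y hy
    simpa [Real.dist_eq] using hy
  obtain ⟨a, ha, hsubL⟩ := mem_nhdsLT_iff_exists_Ioo_subset.mp hmemL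
  have hr : Tendsto ω (𝓝[>] x) (𝓝 (ω x)) :=
    (hcad.1 x).mono_left (nhdsWithin_mono x Ioi_subset_Ici_self)
  have hmemR : {y : ℝ | |ω y - ω x| ≤ c/4} ∈ 𝓝[>] x := by
    filter_upwards [hr (Metric.closedBall_mem_nhds (ω x) h4)] with y hy
    simpa [Real.dist_eq] using hy
  obtain ⟨b, hb, hsubR⟩ := mem_nhdsGT_iff_exists_Ioo_subset.mp hmemR
  set TL := {y ∈ Set.Ioo a x | CMinimum ω c y} ∪ {y ∈ Set.Ioo a x | CMaximum ω c y} with hTL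
  set TR := {y ∈ Set.Ioo x b | CMinimum ω c y} ∪ {y ∈ Set.Ioo x b | CMaximum ω c y} with hTR
  have hTLfin : TL.Finite :=
    cextrema_subsingletons ω hcad.2 a x l c hc (fun y hy => hsubL hy)
  have hTRfin : TR.Finite :=
    cextrema_subsingletons ω hcad.2 x b (ω x) c hc (fun y hy => hsubR hy)
  have hTfin : (TL ∪ TR).Finite := hTLfin.union hTRfin
  have hxT : x ∉ TL ∪ TR := by
    rintro ((⟨h, -⟩ | ⟨h, -⟩) | (⟨h, -⟩ | ⟨h, -⟩)) <;>
      first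
        | exact lt_irrefl x h.2
        | exact lt_irrefl x h.1
  have hU : Set.Ioo a b \ (TL ∪ TR) ∈ 𝓝 x := by
    apply Filter.inter_mem (Ioo_mem_nhds ha hb)
    exact hTfin.isClosed.isOpen_compl.mem_nhds hxT
  obtain ⟨y, ⟨⟨hyI, hyT⟩, hyS⟩, hyx⟩ := (accPt_iff_nhds (x := x) (C := CExtrema ω c)).mp hacc _ hU
  apply hyT
  rcases lt_or_gt_of_ne hyx with h | h
  · have hyIoo : y ∈ Set.Ioo a x := ⟨hyI.1, h⟩
    rcases hyS with hmin | hmax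
    · exact Or.inl (Or.inl ⟨hyIoo, hmin⟩)
    · exact Or.inl (Or.inr ⟨hyIoo, hmax⟩)
  · have hyIoo : y ∈ Set.Ioo x b := ⟨h, hyI.2⟩
    rcases hyS with hmin | hmax
    · exact Or.inr (Or.inl ⟨hyIoo, hmin⟩)
    · exact Or.inr (Or.inr ⟨hyIoo, hmax⟩)
end

section
/- Let ω : ℝ → ℝ be càdlàg, continuous at its local extrema, and taking pairwise distinct values at its local extrema (if x ≠ y are both local extrema of ω then ω(x) ≠ ω(y)). Then for every c > 0 the c-maxima and c-minima of ω alternate: strictly between any two distinct c-minima of ω there is a c-maximum of ω, and strictly between any two distinct c-maxima of ω there is a c-minimum of ω. -/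
open Filter Set Topology Function

lemma cadlag_leftLim_tendsto {ω : ℝ → ℝ} (h : Cadlag ω) (x : ℝ) :
    Tendsto ω (𝓝[<] x) (𝓝 (Function.leftLim ω x)) := by
  obtain ⟨l, hl⟩ := h.2 x
  rwa [leftLim_eq_of_tendsto hl]

lemma cadlag_subseq {ω : ℝ → ℝ} (h : Cadlag ω) {u : ℕ → ℝ} {t : ℝ}
    (hu : Tendsto u atTop (𝓝 t)) :
    ∃ (L : ℝ) (ψ : ℕ → ℕ), StrictMono ψ ∧ (L = ω t ∨ L = Function.leftLim ω t) ∧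
      Tendsto (fun n => ω (u (ψ n))) atTop (𝓝 L) := by
  by_cases hev : ∀ᶠ n in atTop, t ≤ u n
  · refine ⟨ω t, id, strictMono_id, Or.inl rfl, ?_⟩
    have : Tendsto u atTop (𝓝[Set.Ici t] t) := tendsto_nhdsWithin_iff.2 ⟨hu, hev⟩
    exact (h.1 t).tendsto.comp this
  · have hfreq : ∃ᶠ n in atTop, u n < t := by
      have h5 : ∃ᶠ (n : ℕ) in atTop, ¬ t ≤ u n := Filter.not_eventually.1 hev
      exact h5.mono fun n hn => not_le.1 hn
    obtain ⟨ψ, hψmono, hψ⟩ := extraction_of_frequently_atTop hfreq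
    refine ⟨Function.leftLim ω t, ψ, hψmono, Or.inr rfl, ?_⟩
    have : Tendsto (fun n => u (ψ n)) atTop (𝓝[<] t) :=
      tendsto_nhdsWithin_iff.2 ⟨hu.comp hψmono.tendsto_atTop,
        Filter.Eventually.of_forall hψ⟩
    exact (cadlag_leftLim_tendsto h t).comp this

lemma cadlag_bddAbove {ω : ℝ → ℝ} (h : Cadlag ω) (a b : ℝ) :
    BddAbove (ω '' Set.Icc a b) := by
  by_contra hb
  have hge : ∀ n : ℕ, ∃ s ∈ Set.Icc a b, (n : ℝ) < ω s := by
    intro n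
    rcases not_bddAbove_iff.1 hb (n : ℝ) with ⟨y, ⟨s, hs, rfl⟩, hy⟩
    exact ⟨s, hs, hy⟩
  choose u hu hωu using hge
  obtain ⟨t, _, φ, hφmono, hφ⟩ := isCompact_Icc.tendsto_subseq hu
  obtain ⟨L, ψ, hψmono, _, hL⟩ := cadlag_subseq h hφ
  have h1 : Tendsto (fun n => ω (u (φ (ψ n)))) atTop atTop := by
    apply tendsto_atTop_mono (fun n => (hωu (φ (ψ n))).le)
    exact tendsto_natCast_atTop_atTop.comp ((hφmono.comp hψmono).tendsto_atTop)
  exact (not_tendsto_atTop_of_tendsto_nhds hL) h1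

lemma cadlag_sup_attained {ω : ℝ → ℝ} (h : Cadlag ω) {a b : ℝ} (hab : a ≤ b) :
    ∃ z ∈ Set.Icc a b,
      ω z = sSup (ω '' Set.Icc a b) ∨ Function.leftLim ω z = sSup (ω '' Set.Icc a b) := by
  set S := sSup (ω '' Set.Icc a b) with hS
  have hne : (ω '' Set.Icc a b).Nonempty := ⟨ω a, a, ⟨le_rfl, hab⟩, rfl⟩
  have hbdd := cadlag_bddAbove h a b
  have hsel : ∀ n : ℕ, ∃ s ∈ Set.Icc a b, S - 1 / (n + 1) < ω s := by
    intro n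
    have : S - 1/(n+1) < S := by
      have : (0:ℝ) < 1/(n+1) := by positivity
      linarith
    rcases exists_lt_of_lt_csSup hne this with ⟨y, ⟨s, hs, rfl⟩, hy⟩
    exact ⟨s, hs, hy⟩
  choose u hu hωu using hsel
  obtain ⟨t, ht, φ, hφmono, hφ⟩ := isCompact_Icc.tendsto_subseq hu
  obtain ⟨L, ψ, hψmono, hLeq, hL⟩ := cadlag_subseq h hφ
  have htend : Tendsto (fun n => ω (u (φ (ψ n)))) atTop (𝓝 S) := by
    apply tendsto_of_tendsto_of_tendsto_of_le_of_le
      (g := fun n : ℕ => S - 1 / ((φ (ψ n) : ℝ) + 1)) (h := fun _ => S)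
    · have h2 : Tendsto (fun n : ℕ => ((φ (ψ n) : ℝ) + 1)) atTop atTop := by
        apply tendsto_atTop_add_const_right
        exact tendsto_natCast_atTop_atTop.comp ((hφmono.comp hψmono).tendsto_atTop)
      have h3 : Tendsto (fun n : ℕ => 1 / ((φ (ψ n) : ℝ) + 1)) atTop (𝓝 0) :=
        Tendsto.div_atTop tendsto_const_nhds h2
      have h4 := Tendsto.sub (tendsto_const_nhds (x := S)) h3
      simpa using h4
    · exact tendsto_const_nhds
    · exact fun n => (hωu (φ (ψ n))).le
    · exact fun n => le_csSup hbdd ⟨u (φ (ψ n)), hu _, rfl⟩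
  have : L = S := tendsto_nhds_unique hL htend
  exact ⟨t, ht, by rcases hLeq with h1 | h1 <;> [left; right] <;> rw [← h1, this]⟩

lemma leftLim_le_of_le {ω : ℝ → ℝ} (h : Cadlag ω) {a t S : ℝ} (hat : a < t)
    (hb : ∀ s ∈ Set.Ioo a t, ω s ≤ S) : Function.leftLim ω t ≤ S :=
  le_of_tendsto (cadlag_leftLim_tendsto h t)
    (Filter.eventually_iff_exists_mem.2 ⟨Set.Ioo a t, Ioo_mem_nhdsLT_of_mem ⟨hat, le_rfl⟩, hb⟩)

lemma max_point_extremum {ω : ℝ → ℝ} {S a b z : ℝ} (hz : z ∈ Set.Ioo a b)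
    (hS : ∀ t ∈ Set.Icc a b, ω t ≤ S)
    (h : ω z = S ∨ Function.leftLim ω z = S) : LocalExtremum ω z := by
  rcases h with h | h
  · right; left
    refine ⟨b - z, by linarith [hz.2], fun t ht => ?_⟩
    have htm : t ∈ Set.Icc a b := ⟨by linarith [hz.1, ht.1], by linarith [ht.2]⟩
    rw [h]; exact hS t htm
  · left
    refine ⟨z - a, by linarith [hz.1], fun t ht => ?_⟩
    have htm : t ∈ Set.Icc a b := ⟨by linarith [ht.1], by linarith [ht.2, hz.2]⟩
    rw [h]; exact hS t htm

lemma CMinimum.localExtremum {ω : ℝ → ℝ} {c x0 : ℝ} (hm : CMinimum ω c x0) :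
    LocalExtremum ω x0 := by
  obtain ⟨ξ, ζ, hξ, hζ, _, _, h3⟩ := hm
  rcases le_total (ω x0) (Function.leftLim ω x0) with hle | hle
  · right; right; right
    refine ⟨ζ - x0, by linarith, fun t ht => ?_⟩
    have h3t := h3 t ⟨hξ.trans ht.1, by linarith [ht.2]⟩ (ne_of_gt ht.1)
    rw [min_eq_left hle] at h3t
    exact le_of_lt (lt_of_lt_of_le h3t (min_le_left _ _))
  · right; right; left
    refine ⟨x0 - ξ, by linarith, fun t ht => ?_⟩
    have h3t := h3 t ⟨by linarith [ht.1], ht.2.trans hζ⟩ (ne_of_lt ht.2)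
    rw [min_eq_right hle] at h3t
    exact le_of_lt (lt_of_lt_of_le h3t (min_le_left _ _))

lemma cadlag_neg {ω : ℝ → ℝ} (h : Cadlag ω) : Cadlag (fun t => -ω t) :=
  ⟨fun x => (h.1 x).neg, fun x => ⟨-Function.leftLim ω x, (cadlag_leftLim_tendsto h x).neg⟩⟩

lemma leftLim_neg {ω : ℝ → ℝ} (h : Cadlag ω) (x : ℝ) :
    Function.leftLim (fun t => -ω t) x = -Function.leftLim ω x :=
  leftLim_eq_of_tendsto (cadlag_leftLim_tendsto h x).neg

lemma localExtremum_neg {ω : ℝ → ℝ} (h : Cadlag ω) (x0 : ℝ) :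
    LocalExtremum (fun t => -ω t) x0 → LocalExtremum ω x0 := by
  have hL := leftLim_neg h x0
  rintro (⟨ε, hε, H⟩ | ⟨ε, hε, H⟩ | ⟨ε, hε, H⟩ | ⟨ε, hε, H⟩)
  · right; right; left
    exact ⟨ε, hε, fun t ht => by have := H t ht; simp only at this; rw [hL] at this; linarith⟩
  · right; right; right
    exact ⟨ε, hε, fun t ht => by have := H t ht; simp only at this; linarith⟩
  · left
    exact ⟨ε, hε, fun t ht => by have := H t ht; simp only at this; rw [hL] at this; linarith⟩
  · right; left
    exact ⟨ε, hε, fun t ht => by have := H t ht; simp only at this; linarith⟩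

lemma between_minima {ω : ℝ → ℝ} (hcad : Cadlag ω)
    (hext : ∀ x0 : ℝ, LocalExtremum ω x0 → ω x0 = Function.leftLim ω x0)
    (hdist : ∀ x y : ℝ, LocalExtremum ω x → LocalExtremum ω y → x ≠ y → ω x ≠ ω y)
    {c : ℝ} (hc : 0 < c) :
    ∀ x y : ℝ, x < y → CMinimum ω c x → CMinimum ω c y →
      ∃ z : ℝ, x < z ∧ z < y ∧ CMaximum ω c z := by
  intro x y hxy hx hy
  have hex : ω x = Function.leftLim ω x := hext x hx.localExtremum
  have hey : ω y = Function.leftLim ω y := hext y hy.localExtremum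
  obtain ⟨ξ, ζ, hξ, hζ, h1, h2, h3⟩ := hx
  obtain ⟨ξ', ζ', hξ', hζ', h1', h2', h3'⟩ := hy
  have hmx : min (ω x) (Function.leftLim ω x) = ω x := by rw [← hex, min_self]
  have hmy : min (ω y) (Function.leftLim ω y) = ω y := by rw [← hey, min_self]
  rw [hmx] at h1 h2 h3
  rw [hmy] at h1' h2' h3'
  set S := sSup (ω '' Set.Icc x y) with hSdef
  have hbdd := cadlag_bddAbove hcad x y
  have hub : ∀ t ∈ Set.Icc x y, ω t ≤ S := fun t ht => le_csSup hbdd ⟨t, ht, rfl⟩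
  have hubL : ∀ t, x < t → t ≤ y → Function.leftLim ω t ≤ S := fun t h1t h2t =>
    leftLim_le_of_le hcad h1t (fun s hs => hub s ⟨hs.1.le, hs.2.le.trans h2t⟩)
  have key : ω x + c ≤ S ∧ ω y + c ≤ S := by
    have A : ζ ≤ y → ω x + c ≤ S := fun hzy => h2.trans (hubL ζ hζ hzy)
    have B : y < ζ → ω x < ω y := fun hyz => by
      have := h3 y ⟨hξ.trans hxy, hyz⟩ (ne_of_gt hxy)
      rwa [hmy] at this
    have A' : x ≤ ξ' → ω y + c ≤ S := fun hxξ => h1'.trans (hub ξ' ⟨hxξ, hξ'.le⟩)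
    have B' : ξ' < x → ω y < ω x := fun hξx => by
      have := h3' x ⟨hξx, hxy.trans hζ'⟩ (ne_of_lt hxy)
      rwa [hmx] at this
    rcases le_or_gt ζ y with h | h <;> rcases le_or_gt x ξ' with h' | h'
    · exact ⟨A h, A' h'⟩
    · exact ⟨A h, by linarith [A h, B' h']⟩
    · exact ⟨by linarith [A' h', B h], A' h'⟩
    · linarith [B h, B' h']
  obtain ⟨z, hz, hzS⟩ := cadlag_sup_attained hcad hxy.le
  have hzx : z ≠ x := by
    rintro rfl
    rcases hzS with h | h
    · linarith [key.1]
    · rw [← hex] at h; linarith [key.1]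
  have hzy : z ≠ y := by
    rintro rfl
    rcases hzS with h | h
    · linarith [key.2]
    · rw [← hey] at h; linarith [key.2]
  have hzo : z ∈ Set.Ioo x y := ⟨lt_of_le_of_ne hz.1 (Ne.symm hzx), lt_of_le_of_ne hz.2 hzy⟩
  have hzext : LocalExtremum ω z := max_point_extremum hzo hub hzS
  have hez : ω z = Function.leftLim ω z := hext z hzext
  have hzSval : ω z = S := by
    rcases hzS with h | h
    · exact h
    · rw [hez]; exact h
  refine ⟨z, hzo.1, hzo.2, ?_⟩
  unfold CMaximum CMinimum
  have hLneg : ∀ t, Function.leftLim (fun s => -ω s) t = -Function.leftLim ω t :=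
    leftLim_neg hcad
  refine ⟨x, y, hzo.1, hzo.2, ?_, ?_, ?_⟩
  · simp only [hLneg]
    rw [← hez, min_self, hzSval]
    linarith [key.1]
  · simp only [hLneg]
    rw [← hez, min_self, hzSval, ← hey]
    linarith [key.2]
  · intro t ht hne
    have h1t : ω t ≤ S := hub t ⟨ht.1.le, ht.2.le⟩
    have h2t : Function.leftLim ω t ≤ S := hubL t ht.1 ht.2.le
    have hnor : ¬ (ω t = S ∨ Function.leftLim ω t = S) := by
      intro hor
      have htext := max_point_extremum ht hub hor
      have het := hext t htext
      have hts : ω t = S := by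
        rcases hor with h | h
        · exact h
        · rw [het]; exact h
      exact hdist t z htext hzext hne (by rw [hts, hzSval])
    have hlt1 : ω t < S := lt_of_le_of_ne h1t (fun h => hnor (Or.inl h))
    have hlt2 : Function.leftLim ω t < S := lt_of_le_of_ne h2t (fun h => hnor (Or.inr h))
    simp only [hLneg]
    rw [← hez, min_self, hzSval]
    exact lt_min (by linarith) (by linarith)


/-- Let `ω : ℝ → ℝ` be càdlàg, continuous at its local extrema, with
pairwise distinct values at its local extrema.  Then for every `c > 0` the `c`-maxima and
`c`-minima of `ω` alternate: strictly between two distinct `c`-minima there is a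
`c`-maximum, and strictly between two distinct `c`-maxima there is a `c`-minimum. -/
theorem cExtrema_alternate
    (ω : ℝ → ℝ) (hcad : Cadlag ω)
    (hext : ∀ x0 : ℝ, LocalExtremum ω x0 → ω x0 = Function.leftLim ω x0)
    (hdist : ∀ x y : ℝ, LocalExtremum ω x → LocalExtremum ω y → x ≠ y → ω x ≠ ω y)
    (c : ℝ) (hc : 0 < c) :
    (∀ x y : ℝ, x < y → CMinimum ω c x → CMinimum ω c y →
      ∃ z : ℝ, x < z ∧ z < y ∧ CMaximum ω c z) ∧
    (∀ x y : ℝ, x < y → CMaximum ω c x → CMaximum ω c y →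
      ∃ z : ℝ, x < z ∧ z < y ∧ CMinimum ω c z) := by
  constructor
  · exact between_minima hcad hext hdist hc
  · intro x y hxy hx hy
    have hcad' : Cadlag (fun t => -ω t) := cadlag_neg hcad
    have hext' : ∀ x0 : ℝ, LocalExtremum (fun t => -ω t) x0 →
        (fun t => -ω t) x0 = Function.leftLim (fun t => -ω t) x0 := by
      intro x0 h
      rw [leftLim_neg hcad x0]
      simp only [neg_inj]
      exact hext x0 (localExtremum_neg hcad x0 h)
    have hdist' : ∀ a b : ℝ, LocalExtremum (fun t => -ω t) a →
        LocalExtremum (fun t => -ω t) b → a ≠ b → (fun t => -ω t) a ≠ (fun t => -ω t) b := by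
      intro a b ha hb hne heq
      exact hdist a b (localExtremum_neg hcad a ha) (localExtremum_neg hcad b hb) hne
        (neg_injective heq)
    obtain ⟨z, hz1, hz2, hz3⟩ := between_minima hcad' hext' hdist' hc x y hxy hx hy
    refine ⟨z, hz1, hz2, ?_⟩
    have hres : CMinimum (fun t => - -ω t) c z := hz3
    simpa only [neg_neg] using hres
end

section
/- Let ω : [0,∞) → ℝ be càdlàg and continuous at its local extrema, with ω(0) = 0. For y > 0 set τ_y(ω) = inf{ t ≥ 0 : ω(t) ≥ y }, and assume τ_1(ω) < ∞. Then lim_{y→1−} ω(τ_y(ω)) = ω(τ_1(ω)). -/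
open Filter Set Topology Function

/-- `x0` is a left local maximum of `ω` relative to the domain `[0,∞)`. -/
def LeftLocalMax0 (ω : ℝ → ℝ) (x0 : ℝ) : Prop :=
  0 < x0 ∧ ∃ ε > (0 : ℝ), ∀ x ∈ Set.Ioo (x0 - ε) x0 ∩ Set.Ici 0,
    ω x ≤ Function.leftLim ω x0

/-- `x0` is a right local maximum of `ω` relative to the domain `[0,∞)`. -/
def RightLocalMax0 (ω : ℝ → ℝ) (x0 : ℝ) : Prop :=
  0 ≤ x0 ∧ ∃ ε > (0 : ℝ), ∀ x ∈ Set.Ioo x0 (x0 + ε), ω x ≤ ω x0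

/-- `x0` is a left local minimum of `ω` relative to the domain `[0,∞)`. -/
def LeftLocalMin0 (ω : ℝ → ℝ) (x0 : ℝ) : Prop :=
  0 < x0 ∧ ∃ ε > (0 : ℝ), ∀ x ∈ Set.Ioo (x0 - ε) x0 ∩ Set.Ici 0,
    Function.leftLim ω x0 ≤ ω x

/-- `x0` is a right local minimum of `ω` relative to the domain `[0,∞)`. -/
def RightLocalMin0 (ω : ℝ → ℝ) (x0 : ℝ) : Prop :=
  0 ≤ x0 ∧ ∃ ε > (0 : ℝ), ∀ x ∈ Set.Ioo x0 (x0 + ε), ω x0 ≤ ω x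

/-- `x0` is a local extremum of `ω` relative to the domain `[0,∞)`. -/
def LocalExtremum0 (ω : ℝ → ℝ) (x0 : ℝ) : Prop :=
  LeftLocalMax0 ω x0 ∨ RightLocalMax0 ω x0 ∨ LeftLocalMin0 ω x0 ∨ RightLocalMin0 ω x0

/-- `τ_y(ω) = inf{ t ≥ 0 : ω(t) ≥ y }`. -/
noncomputable def tauTime (y : ℝ) (ω : ℝ → ℝ) : ℝ := sInf {t : ℝ | 0 ≤ t ∧ y ≤ ω t}

/-- Let `ω : [0,∞) → ℝ` be càdlàg and continuous at its local extrema,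
with `ω 0 = 0`; assume `τ_1(ω) < ∞`.  Then `lim_{y→1−} ω(τ_y(ω)) = ω(τ_1(ω))`. -/
theorem tendsto_omega_tau_left_one
    (ω : ℝ → ℝ)
    (hright : ∀ x : ℝ, 0 ≤ x → ContinuousWithinAt ω (Set.Ici x) x)
    (hleft : ∀ x : ℝ, 0 < x → ∃ l : ℝ, Tendsto ω (𝓝[<] x) (𝓝 l))
    (hext : ∀ x0 : ℝ, 0 < x0 → LocalExtremum0 ω x0 → ω x0 = Function.leftLim ω x0)
    (h0 : ω 0 = 0)
    (hfin : {t : ℝ | 0 ≤ t ∧ 1 ≤ ω t}.Nonempty) :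
    Tendsto (fun y : ℝ => ω (tauTime y ω)) (𝓝[<] (1 : ℝ)) (𝓝 (ω (tauTime 1 ω))) := by
  set S : ℝ → Set ℝ := fun y => {t : ℝ | 0 ≤ t ∧ y ≤ ω t} with hS
  have hbdd : ∀ y, BddBelow (S y) := fun y => ⟨0, fun t ht => ht.1⟩
  have hne : ∀ y, y ≤ 1 → (S y).Nonempty := fun y hy =>
    hfin.mono (fun t ht => ⟨ht.1, hy.trans ht.2⟩)
  have htau_def : ∀ y, tauTime y ω = sInf (S y) := fun y => rfl
  have htau_nonneg : ∀ y, y ≤ 1 → 0 ≤ tauTime y ω := fun y hy =>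
    le_csInf (hne y hy) (fun t ht => ht.1)
  have hmono : ∀ y y', y ≤ y' → y' ≤ 1 → tauTime y ω ≤ tauTime y' ω := fun y y' h h1 =>
    csInf_le_csInf (hbdd y) (hne y' h1) (fun t ht => ⟨ht.1, h.trans ht.2⟩)
  have hhit : ∀ y, y ≤ 1 → y ≤ ω (tauTime y ω) := by
    intro y hy
    by_contra hcon
    push_neg at hcon
    have hτ0 := htau_nonneg y hy
    have := (hright _ hτ0).tendsto (Iio_mem_nhds hcon)
    rw [mem_map, mem_nhdsGE_iff_exists_Ico_subset] at this
    obtain ⟨u, hu, hsub⟩ := this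
    obtain ⟨t, htS, htlt⟩ := exists_lt_of_csInf_lt (hne y hy) hu
    have htge : tauTime y ω ≤ t := csInf_le (hbdd y) htS
    exact absurd (hsub ⟨htge, htlt⟩) (not_lt.2 htS.2)
  have hlt : ∀ y, ∀ t, 0 ≤ t → t < tauTime y ω → ω t < y := by
    intro y t ht0 htlt
    by_contra hcon
    push_neg at hcon
    exact absurd (csInf_le (hbdd y) ⟨ht0, hcon⟩) (not_le.2 htlt)
  by_cases hA : ∃ y0 ∈ Ioo (0:ℝ) 1, tauTime y0 ω = tauTime 1 ω
  · -- eventually constant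
    obtain ⟨y0, hy0, heq⟩ := hA
    refine tendsto_const_nhds.congr' ?_
    filter_upwards [Ioo_mem_nhdsLT_of_mem (⟨hy0.2, le_refl 1⟩ : (1:ℝ) ∈ Ioc y0 1)]
      with y hy
    have h1 : tauTime y ω ≤ tauTime 1 ω := hmono y 1 hy.2.le le_rfl
    have h2 : tauTime 1 ω ≤ tauTime y ω := heq ▸ hmono y0 y hy.1.le hy.2.le
    rw [le_antisymm h1 h2]
  · push_neg at hA
    have hAlt : ∀ y ∈ Ioo (0:ℝ) 1, tauTime y ω < tauTime 1 ω := fun y hy =>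
      lt_of_le_of_ne (hmono y 1 hy.2.le le_rfl) (hA y hy)
    set σ : ℝ := sSup ((fun y => tauTime y ω) '' Ioo (0:ℝ) 1) with hσdef
    have himne : ((fun y => tauTime y ω) '' Ioo (0:ℝ) 1).Nonempty :=
      ⟨tauTime (1/2) ω, ⟨1/2, ⟨by norm_num, by norm_num⟩, rfl⟩⟩
    have himbdd : BddAbove ((fun y => tauTime y ω) '' Ioo (0:ℝ) 1) :=
      ⟨tauTime 1 ω, fun t ⟨y, hy, hyt⟩ => hyt ▸ (hAlt y hy).le⟩
    have hσle : σ ≤ tauTime 1 ω := csSup_le himne (fun t ⟨y, hy, hyt⟩ => hyt ▸ (hAlt y hy).le)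
    have hτhalf : 0 < tauTime (1/2) ω := by
      rcases (htau_nonneg (1/2) (by norm_num)).lt_or_eq with h | h
      · exact h
      · exfalso
        have := hhit (1/2) (by norm_num)
        rw [← h, h0] at this; norm_num at this
    have hσpos : 0 < σ :=
      hτhalf.trans_le (le_csSup himbdd ⟨1/2, ⟨by norm_num, by norm_num⟩, rfl⟩)
    have hωltσ : ∀ t, 0 ≤ t → t < σ → ω t < 1 := by
      intro t ht0 htσ
      obtain ⟨a, ⟨y, hy, rfl⟩, hta⟩ := exists_lt_of_lt_csSup himne htσ
      exact (hlt y t ht0 hta).trans hy.2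
    have hτltσ : ∀ y ∈ Ioo (0:ℝ) 1, tauTime y ω < σ := by
      intro y hy
      rcases (le_csSup himbdd ⟨y, hy, rfl⟩).lt_or_eq with h | h
      · exact h
      · exfalso
        have h' : tauTime y ω = σ := h
        have hω1 : 1 ≤ ω σ := by
          rw [← not_lt]
          intro hcon
          set y' := max y ((ω σ + 1)/2) with hy'
          have hy'1 : y' < 1 := max_lt hy.2 (by linarith)
          have hy'0 : 0 < y' := lt_of_lt_of_le hy.1 (le_max_left _ _)
          have h1 : tauTime y' ω ≤ σ := le_csSup himbdd ⟨y', ⟨hy'0, hy'1⟩, rfl⟩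
          have h2 : σ ≤ tauTime y' ω := h' ▸ hmono y y' (le_max_left _ _) hy'1.le
          have := hhit y' hy'1.le
          rw [le_antisymm h1 h2] at this
          have : (ω σ + 1)/2 ≤ ω σ := le_trans (le_max_right _ _) this
          linarith
        have hστ : tauTime 1 ω ≤ σ := csInf_le (hbdd 1) ⟨hσpos.le, hω1⟩
        exact absurd (h' ▸ hAlt y hy) (not_lt.2 hστ)
    obtain ⟨l, hl⟩ := hleft σ hσpos
    have hl_le : l ≤ 1 := by
      refine le_of_tendsto hl ?_
      filter_upwards [Ioo_mem_nhdsLT_of_mem (⟨hσpos, le_refl σ⟩ : σ ∈ Ioc 0 σ)] with t ht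
      exact (hωltσ t ht.1.le ht.2).le
    have hl_ge : 1 ≤ l := by
      rw [← not_lt]
      intro hcon
      set y := max (1/2) ((l+1)/2) with hydef
      have hy1 : y < 1 := max_lt (by norm_num) (by linarith)
      have hy0 : (0:ℝ) < y := lt_of_lt_of_le (by norm_num) (le_max_left _ _)
      have hly : l < y := lt_of_lt_of_le (by linarith) (le_max_right _ _)
      have hev := hl (Iio_mem_nhds hly)
      rw [mem_map, mem_nhdsLT_iff_exists_Ioo_subset] at hev
      obtain ⟨a, ha, hsub⟩ := hev
      obtain ⟨b, ⟨y'', hy'', rfl⟩, hab⟩ := exists_lt_of_lt_csSup himne ha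
      set y' := max y y'' with hy'def
      have hy'1 : y' < 1 := max_lt hy1 hy''.2
      have hy'0 : (0:ℝ) < y' := lt_of_lt_of_le hy0 (le_max_left _ _)
      have h1 : a < tauTime y' ω := lt_of_lt_of_le hab (hmono y'' y' (le_max_right _ _) hy'1.le)
      have h2 : tauTime y' ω < σ := hτltσ y' ⟨hy'0, hy'1⟩
      have h3 : ω (tauTime y' ω) < y := hsub ⟨h1, h2⟩
      have h4 : y' ≤ ω (tauTime y' ω) := hhit y' hy'1.le
      exact absurd (lt_of_le_of_lt (le_trans (le_max_left _ _) h4) h3) (lt_irrefl y)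
    have hl1 : l = 1 := le_antisymm hl_le hl_ge
    have hleftLim : Function.leftLim ω σ = 1 := by
      rw [← hl1]
      exact leftLim_eq_of_tendsto hl
    have hmax : LeftLocalMax0 ω σ := by
      refine ⟨hσpos, σ, hσpos, fun x hx => ?_⟩
      rw [hleftLim]
      exact (hωltσ x hx.2 hx.1.2).le
    have hωσ : ω σ = 1 := (hext σ hσpos (Or.inl hmax)).trans hleftLim
    have hστ : σ = tauTime 1 ω :=
      le_antisymm hσle (csInf_le (hbdd 1) ⟨hσpos.le, hωσ.ge⟩)
    have hωτ1 : ω (tauTime 1 ω) = 1 := hστ ▸ hωσ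
    rw [hωτ1]
    -- squeeze
    have hid : Tendsto (fun y : ℝ => y) (𝓝[<] (1:ℝ)) (𝓝 1) :=
      tendsto_id.mono_left nhdsWithin_le_nhds
    refine tendsto_of_tendsto_of_tendsto_of_le_of_le' hid tendsto_const_nhds ?_ ?_
    · filter_upwards [self_mem_nhdsWithin] with y (hy : y < 1)
      exact hhit y hy.le
    · filter_upwards [Ioo_mem_nhdsLT_of_mem (⟨(by norm_num : (0:ℝ) < 1), le_refl 1⟩ :
        (1:ℝ) ∈ Ioc 0 1)] with y hy
      exact (hlt 1 (tauTime y ω) (htau_nonneg y hy.2.le) (hAlt y hy)).le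
end
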